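/- Let L : ℝ^d → [0,∞) be continuous and strictly positive with ∫_{ℝ^d} L(t) dt = 1, and suppose ∫_{ℝ^d} sup_{t∈[0,T]^d} L(t−x) dx < ∞ for every T > 0. Then lim_{T→∞} T^{-d} ∫_{ℝ^d} sup_{t∈[0,T]^d} L(t−x) dx = sup_{t∈ℝ^d} L(t), and in particular sup_{t∈ℝ^d} L(t) < ∞. -/

import Mathlib

open MeasureTheory ENNReal Filter Set Topology

namespace PickandsAux

variable {d : ℕ} {L : (Fin d → ℝ) → ℝ}

lemma lsc_indicator {U : Set (Fin d → ℝ)} (hU : IsOpen U) (hcont : Continuous L) :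
    LowerSemicontinuous (U.indicator (fun y => ENNReal.ofReal (L y))) := by
  intro x y hy
  by_cases hx : x ∈ U
  · rw [Set.indicator_of_mem hx] at hy
    have hopen : IsOpen {z | y < ENNReal.ofReal (L z)} :=
      isOpen_lt continuous_const (ENNReal.continuous_ofReal.comp hcont)
    filter_upwards [hU.mem_nhds hx, hopen.mem_nhds hy] with z hz1 hz2
    rwa [Set.indicator_of_mem hz1]
  · rw [Set.indicator_of_notMem hx] at hy
    exact absurd hy (by simp)

lemma meas_sup (hcont : Continuous L) (S : Set (Fin d → ℝ)) {U : Set (Fin d → ℝ)}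
    (hU : IsOpen U) :
    Measurable (fun x => ⨆ t ∈ S, U.indicator (fun y => ENNReal.ofReal (L y)) (t - x)) := by
  apply LowerSemicontinuous.measurable
  apply lowerSemicontinuous_biSup
  intro t ht
  exact (lsc_indicator hU hcont).comp (continuous_const.sub continuous_id)

lemma meas_sup' (hcont : Continuous L) (S : Set (Fin d → ℝ)) :
    Measurable (fun x => ⨆ t ∈ S, ENNReal.ofReal (L (t - x))) := by
  simpa [Set.indicator_univ] using meas_sup hcont S isOpen_univ

lemma lintegral_sup_Icc_translate (k : Fin d → ℝ) (F : (Fin d → ℝ) → ℝ≥0∞) :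
    (∫⁻ x, ⨆ t ∈ Set.Icc k (k + 1), F (t - x)) =
      ∫⁻ x, ⨆ t ∈ Set.Icc (0 : Fin d → ℝ) 1, F (t - x) := by
  have key : ∀ x : Fin d → ℝ, (⨆ t ∈ Set.Icc k (k + 1), F (t - x)) =
      ⨆ t ∈ Set.Icc (0 : Fin d → ℝ) 1, F (t - (x - k)) := by
    intro x
    apply le_antisymm
    · refine iSup₂_le fun t ht => ?_
      have h1 : t - k ∈ Set.Icc (0 : Fin d → ℝ) 1 :=
        ⟨sub_nonneg.2 ht.1, sub_le_iff_le_add.2 (by simpa [add_comm] using ht.2)⟩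
      refine le_trans (le_of_eq ?_) (le_iSup₂ (t - k) h1)
      congr 1; abel
    · refine iSup₂_le fun s hs => ?_
      have h1 : s + k ∈ Set.Icc k (k + 1) :=
        ⟨le_add_of_nonneg_left hs.1, by simpa [add_comm] using add_le_add_right hs.2 k⟩
      refine le_trans (le_of_eq ?_) (le_iSup₂ (s + k) h1)
      congr 1; abel
  simp_rw [key]
  have := lintegral_add_right_eq_self (μ := (volume : Measure (Fin d → ℝ)))
    (fun x => ⨆ t ∈ Set.Icc (0 : Fin d → ℝ) 1, F (t - x)) (-k)
  simpa [sub_eq_add_neg] using this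

lemma cover_le (F : (Fin d → ℝ) → ℝ≥0∞) {T : ℝ} (hT : 0 < T) (x : Fin d → ℝ) :
    (⨆ t ∈ Set.Icc (0 : Fin d → ℝ) (fun _ => T), F (t - x)) ≤
      ∑ k ∈ Fintype.piFinset (fun _ : Fin d => Finset.range ⌈T⌉₊),
        ⨆ t ∈ Set.Icc (fun i => (k i : ℝ)) ((fun i => (k i : ℝ)) + 1), F (t - x) := by
  refine iSup₂_le fun t ht => ?_
  set m := ⌈T⌉₊ with hm
  have hm1 : 1 ≤ m := Nat.one_le_ceil_iff.2 hT
  set k : Fin d → ℕ := fun i => min ⌊t i⌋₊ (m - 1) with hk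
  have hkmem : k ∈ Fintype.piFinset (fun _ : Fin d => Finset.range m) := by
    rw [Fintype.mem_piFinset]
    intro i
    rw [Finset.mem_range]
    exact lt_of_le_of_lt (min_le_right _ _) (Nat.sub_lt hm1 one_pos)
  have ht1 : ∀ i, 0 ≤ t i := fun i => ht.1 i
  have ht2 : ∀ i, t i ≤ T := fun i => ht.2 i
  have htmem : t ∈ Set.Icc (fun i => (k i : ℝ)) ((fun i => (k i : ℝ)) + 1) := by
    constructor
    · intro i
      calc ((k i : ℝ)) ≤ (⌊t i⌋₊ : ℝ) := by exact_mod_cast min_le_left _ _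
        _ ≤ t i := Nat.floor_le (ht1 i)
    · intro i
      show t i ≤ (k i : ℝ) + 1
      rcases le_or_gt ⌊t i⌋₊ (m - 1) with h | h
      · have hki : k i = ⌊t i⌋₊ := min_eq_left h
        rw [hki]
        exact (Nat.lt_floor_add_one (t i)).le
      · have hki : k i = m - 1 := min_eq_right h.le
        rw [hki]
        have h1 : t i ≤ (m : ℝ) := le_trans (ht2 i) (Nat.le_ceil T)
        have hcast : ((m - 1 : ℕ) : ℝ) + 1 = (m : ℝ) := by
          rw [Nat.cast_sub hm1]; push_cast; ring
        rw [hcast]; exact h1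
  calc F (t - x) ≤ ⨆ t ∈ Set.Icc (fun i => (k i : ℝ)) ((fun i => (k i : ℝ)) + 1), F (t - x) :=
        le_iSup₂ (f := fun t _ => F (t - x)) t htmem
    _ ≤ _ := Finset.single_le_sum (f := fun k =>
        ⨆ t ∈ Set.Icc (fun i => ((k : Fin d → ℕ) i : ℝ)) ((fun i => (k i : ℝ)) + 1), F (t - x))
        (fun _ _ => zero_le) hkmem

lemma lower_bound (hcont : Continuous L) (y : Fin d → ℝ) {T : ℝ} (hT : 0 < T) :
    ENNReal.ofReal (L y) * ENNReal.ofReal (T ^ d) ≤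
      ∫⁻ x, ⨆ t ∈ Set.Icc (0 : Fin d → ℝ) (fun _ => T), ENNReal.ofReal (L (t - x)) := by
  have hpt : ∀ x : Fin d → ℝ,
      (Set.Icc (-y) ((fun _ => T) - y)).indicator (fun _ => ENNReal.ofReal (L y)) x ≤
        ⨆ t ∈ Set.Icc (0 : Fin d → ℝ) (fun _ => T), ENNReal.ofReal (L (t - x)) := by
    intro x
    by_cases hx : x ∈ Set.Icc (-y) ((fun _ => T) - y)
    · rw [Set.indicator_of_mem hx]
      have hxy : x + y ∈ Set.Icc (0 : Fin d → ℝ) (fun _ => T) := by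
        constructor
        · intro i
          have := hx.1 i
          simp only [Pi.neg_apply] at this
          simp only [Pi.zero_apply, Pi.add_apply]
          linarith
        · intro i
          have := hx.2 i
          simp only [Pi.sub_apply] at this
          simp only [Pi.add_apply]
          linarith
      have := le_iSup₂ (f := fun t (_ : t ∈ Set.Icc (0 : Fin d → ℝ) (fun _ => T)) =>
        ENNReal.ofReal (L (t - x))) (x + y) hxy
      simpa [add_sub_cancel_left] using this
    · rw [Set.indicator_of_notMem hx]
      exact zero_le
  have hvol : (volume : Measure (Fin d → ℝ)) (Set.Icc (-y) ((fun _ => T) - y)) =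
      ENNReal.ofReal (T ^ d) := by
    rw [Real.volume_Icc_pi]
    simp_rw [Pi.sub_apply, Pi.neg_apply]
    have : (∏ _i : Fin d, ENNReal.ofReal (T - y _i - -(y _i))) =
        ∏ _i : Fin d, ENNReal.ofReal T := by
      apply Finset.prod_congr rfl
      intro i _
      congr 1
      ring
    rw [this, Finset.prod_const, Finset.card_univ, Fintype.card_fin,
      ← ENNReal.ofReal_pow hT.le]
  calc ENNReal.ofReal (L y) * ENNReal.ofReal (T ^ d)
      = ∫⁻ x, (Set.Icc (-y) ((fun _ => T) - y)).indicator
          (fun _ => ENNReal.ofReal (L y)) x := by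
        rw [lintegral_indicator_const measurableSet_Icc, hvol]
    _ ≤ _ := lintegral_mono hpt

lemma main_bound (hcont : Continuous L) (hS : ∀ t, ENNReal.ofReal (L t) ≤ Smax)
    (n : ℕ) {T : ℝ} (hT : 0 < T) :
    (∫⁻ x, ⨆ t ∈ Set.Icc (0 : Fin d → ℝ) (fun _ => T), ENNReal.ofReal (L (t - x))) ≤
      Smax * ENNReal.ofReal ((T + 2 * n) ^ d) + (⌈T⌉₊ : ℝ≥0∞) ^ d *
        ∫⁻ x, ⨆ t ∈ Set.Icc (0 : Fin d → ℝ) 1,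
          ((Set.Icc (fun _ : Fin d => -(n : ℝ)) (fun _ => (n : ℝ)))ᶜ).indicator
            (fun y => ENNReal.ofReal (L y)) (t - x) := by
  set G : (Fin d → ℝ) → ℝ≥0∞ := fun y => ENNReal.ofReal (L y) with hG
  set V : Set (Fin d → ℝ) := Set.Icc (fun _ : Fin d => -(n : ℝ)) (fun _ => (n : ℝ)) with hV
  set A : Set (Fin d → ℝ) := Set.Icc (fun _ : Fin d => -(n : ℝ)) (fun _ => T + n) with hA
  have hVopen : IsOpen Vᶜ := isClosed_Icc.isOpen_compl
  -- pointwise bound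
  have hpt : ∀ x : Fin d → ℝ,
      (⨆ t ∈ Set.Icc (0 : Fin d → ℝ) (fun _ => T), G (t - x)) ≤
        A.indicator (fun _ => Smax) x + ⨆ t ∈ Set.Icc (0 : Fin d → ℝ) (fun _ => T),
          Vᶜ.indicator G (t - x) := by
    intro x
    refine iSup₂_le fun t ht => ?_
    by_cases hv : t - x ∈ V
    · have hxA : x ∈ A := by
        constructor
        · intro i
          have h1 := hv.2 i
          have h2 := ht.1 i
          simp only [Pi.sub_apply] at h1
          simp only [Pi.zero_apply] at h2
          show -(n : ℝ) ≤ x i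
          linarith
        · intro i
          have h1 := hv.1 i
          have h2 := ht.2 i
          simp only [Pi.sub_apply] at h1
          show x i ≤ T + n
          linarith
      calc G (t - x) ≤ Smax := hS _
        _ = A.indicator (fun _ => Smax) x := (Set.indicator_of_mem hxA (fun _ => Smax)).symm
        _ ≤ _ := le_self_add
    · calc G (t - x) = Vᶜ.indicator G (t - x) := (Set.indicator_of_mem (Set.mem_compl hv) G).symm
        _ ≤ ⨆ t ∈ Set.Icc (0 : Fin d → ℝ) (fun _ => T), Vᶜ.indicator G (t - x) :=
            le_iSup₂ (f := fun t (_ : t ∈ Set.Icc (0 : Fin d → ℝ) (fun _ => T)) =>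
              Vᶜ.indicator G (t - x)) t ht
        _ ≤ _ := le_add_self
  have hmeasA : Measurable (A.indicator (fun _ : Fin d → ℝ => Smax)) :=
    measurable_const.indicator measurableSet_Icc
  calc (∫⁻ x, ⨆ t ∈ Set.Icc (0 : Fin d → ℝ) (fun _ => T), G (t - x))
      ≤ ∫⁻ x, (A.indicator (fun _ => Smax) x + ⨆ t ∈ Set.Icc (0 : Fin d → ℝ) (fun _ => T),
          Vᶜ.indicator G (t - x)) := lintegral_mono hpt
    _ = (∫⁻ x, A.indicator (fun _ => Smax) x) +
        ∫⁻ x, ⨆ t ∈ Set.Icc (0 : Fin d → ℝ) (fun _ => T), Vᶜ.indicator G (t - x) :=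
        lintegral_add_left hmeasA _
    _ ≤ Smax * ENNReal.ofReal ((T + 2 * n) ^ d) + (⌈T⌉₊ : ℝ≥0∞) ^ d *
        ∫⁻ x, ⨆ t ∈ Set.Icc (0 : Fin d → ℝ) 1, Vᶜ.indicator G (t - x) := by
        gcongr ?_ + ?_
        · rw [lintegral_indicator_const measurableSet_Icc]
          apply le_of_eq
          congr 1
          rw [Real.volume_Icc_pi]
          have : (∏ _i : Fin d, ENNReal.ofReal ((T + n) - (-(n : ℝ)))) =
              ∏ _i : Fin d, ENNReal.ofReal (T + 2 * n) := by
            apply Finset.prod_congr rfl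
            intro i _
            congr 1
            ring
          rw [this, Finset.prod_const, Finset.card_univ, Fintype.card_fin,
            ← ENNReal.ofReal_pow (by positivity)]
        · calc (∫⁻ x, ⨆ t ∈ Set.Icc (0 : Fin d → ℝ) (fun _ => T), Vᶜ.indicator G (t - x))
              ≤ ∫⁻ x, ∑ k ∈ Fintype.piFinset (fun _ : Fin d => Finset.range ⌈T⌉₊),
                ⨆ t ∈ Set.Icc (fun i => (k i : ℝ)) ((fun i => (k i : ℝ)) + 1),
                  Vᶜ.indicator G (t - x) :=
                lintegral_mono (cover_le (Vᶜ.indicator G) hT)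
            _ = ∑ k ∈ Fintype.piFinset (fun _ : Fin d => Finset.range ⌈T⌉₊),
                ∫⁻ x, ⨆ t ∈ Set.Icc (fun i => (k i : ℝ)) ((fun i => (k i : ℝ)) + 1),
                  Vᶜ.indicator G (t - x) := by
                apply lintegral_finset_sum
                intro k _
                exact meas_sup hcont _ hVopen
            _ = ∑ _k ∈ Fintype.piFinset (fun _ : Fin d => Finset.range ⌈T⌉₊),
                ∫⁻ x, ⨆ t ∈ Set.Icc (0 : Fin d → ℝ) 1, Vᶜ.indicator G (t - x) := by
                apply Finset.sum_congr rfl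
                intro k _
                exact lintegral_sup_Icc_translate (fun i => (k i : ℝ)) (Vᶜ.indicator G)
            _ = (⌈T⌉₊ : ℝ≥0∞) ^ d *
                ∫⁻ x, ⨆ t ∈ Set.Icc (0 : Fin d → ℝ) 1, Vᶜ.indicator G (t - x) := by
                rw [Finset.sum_const, Fintype.card_piFinset]
                simp [nsmul_eq_mul, Finset.card_range]

lemma delta_tendsto (hcont : Continuous L)
    (hfin1 : (∫⁻ x, ⨆ t ∈ Set.Icc (0 : Fin d → ℝ) 1, ENNReal.ofReal (L (t - x))) ≠ ⊤) :
    Tendsto (fun n : ℕ => ∫⁻ x, ⨆ t ∈ Set.Icc (0 : Fin d → ℝ) 1,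
        ((Set.Icc (fun _ : Fin d => -(n : ℝ)) (fun _ => (n : ℝ)))ᶜ).indicator
          (fun y => ENNReal.ofReal (L y)) (t - x)) atTop (𝓝 0) := by
  set G : (Fin d → ℝ) → ℝ≥0∞ := fun y => ENNReal.ofReal (L y) with hG
  have := tendsto_lintegral_of_dominated_convergence (μ := (volume : Measure (Fin d → ℝ)))
    (F := fun (n : ℕ) x => ⨆ t ∈ Set.Icc (0 : Fin d → ℝ) 1,
      ((Set.Icc (fun _ : Fin d => -(n : ℝ)) (fun _ => (n : ℝ)))ᶜ).indicator G (t - x))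
    (f := fun _ => 0)
    (bound := fun x => ⨆ t ∈ Set.Icc (0 : Fin d → ℝ) 1, G (t - x))
    (fun n => meas_sup hcont _ isClosed_Icc.isOpen_compl)
    (fun n => Filter.Eventually.of_forall fun x =>
      iSup₂_mono fun t ht => Set.indicator_le_self _ _ _)
    hfin1
    (Filter.Eventually.of_forall fun x => ?_)
  · simpa using this
  · -- pointwise convergence to 0
    obtain ⟨N, hN⟩ := exists_nat_ge (‖x‖ + 1)
    apply Filter.Tendsto.congr' (f₁ := fun _ => (0 : ℝ≥0∞))
    · filter_upwards [eventually_ge_atTop N] with n hn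
      symm
      apply le_antisymm _ zero_le
      refine iSup₂_le fun t ht => ?_
      rw [Set.indicator_of_notMem]
      · simp only [notMem_compl_iff]
        constructor
        · intro i
          have h1 := ht.1 i
          have h2 := ht.2 i
          have h3 : |x i| ≤ ‖x‖ := by
            simpa [Real.norm_eq_abs] using norm_le_pi_norm x i
          have h4 : (N : ℝ) ≤ n := Nat.cast_le.2 hn
          simp only [Pi.zero_apply] at h1
          simp only [Pi.one_apply] at h2
          simp only [Pi.sub_apply]
          show -(n : ℝ) ≤ t i - x i
          have := abs_le.1 h3
          linarith
        · intro i
          have h1 := ht.1 i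
          have h2 := ht.2 i
          have h3 : |x i| ≤ ‖x‖ := by
            simpa [Real.norm_eq_abs] using norm_le_pi_norm x i
          have h4 : (N : ℝ) ≤ n := Nat.cast_le.2 hn
          simp only [Pi.zero_apply] at h1
          simp only [Pi.one_apply] at h2
          simp only [Pi.sub_apply]
          show t i - x i ≤ (n : ℝ)
          have := abs_le.1 h3
          linarith
    · exact tendsto_const_nhds

end PickandsAux

/-- The cube `[0,T]^d`. -/
noncomputable def pickandsCube (d : ℕ) (T : ℝ) : Set (Fin d → ℝ) :=
  Set.Icc 0 (fun _ => T)

/-- for continuous strictly positive `L` with `∫ L = 1` and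
`∫_{ℝ^d} sup_{t ∈ [0,T]^d} L(t−x) dx < ∞` for all `T > 0`, one has
`lim_{T→∞} T^{-d} ∫_{ℝ^d} sup_{t∈[0,T]^d} L(t−x) dx = sup_{t∈ℝ^d} L(t) < ∞`. -/
theorem pickands_constant_of_density
    (d : ℕ) (hd : 0 < d) (L : (Fin d → ℝ) → ℝ)
    (hcont : Continuous L)
    (hpos : ∀ t, 0 < L t)
    (hint : ∫⁻ t : Fin d → ℝ, ENNReal.ofReal (L t) = 1)
    (hfin : ∀ T > (0 : ℝ),
      (∫⁻ x : Fin d → ℝ, ⨆ t ∈ pickandsCube d T, ENNReal.ofReal (L (t - x))) ≠ ⊤) :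
    Tendsto (fun T : ℝ =>
        (∫⁻ x : Fin d → ℝ, ⨆ t ∈ pickandsCube d T, ENNReal.ofReal (L (t - x))) /
          ENNReal.ofReal (T ^ d))
      atTop (𝓝 (⨆ t : Fin d → ℝ, ENNReal.ofReal (L t))) ∧
    (⨆ t : Fin d → ℝ, ENNReal.ofReal (L t)) ≠ ⊤ := by
  simp only [pickandsCube] at hfin ⊢
  set S : ℝ≥0∞ := ⨆ t : Fin d → ℝ, ENNReal.ofReal (L t) with hSdef
  set M : ℝ → ℝ≥0∞ := fun T =>
    ∫⁻ x : Fin d → ℝ, ⨆ t ∈ Set.Icc (0 : Fin d → ℝ) (fun _ => T), ENNReal.ofReal (L (t - x))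
    with hMdef
  set δ : ℕ → ℝ≥0∞ := fun n => ∫⁻ x, ⨆ t ∈ Set.Icc (0 : Fin d → ℝ) 1,
    ((Set.Icc (fun _ : Fin d => -(n : ℝ)) (fun _ => (n : ℝ)))ᶜ).indicator
      (fun y => ENNReal.ofReal (L y)) (t - x) with hδdef
  have hM1 : M 1 ≠ ⊤ := hfin 1 one_pos
  have hSle : S ≤ M 1 := by
    refine iSup_le fun y => ?_
    have := PickandsAux.lower_bound hcont y one_pos (L := L)
    simpa [hMdef] using this
  have hSne : S ≠ ⊤ := (lt_of_le_of_lt hSle (lt_top_iff_ne_top.2 hM1)).ne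
  refine ⟨?_, hSne⟩
  have hSb : ∀ t, ENNReal.ofReal (L t) ≤ S := fun t => le_iSup (fun t : Fin d → ℝ => ENNReal.ofReal (L t)) t
  -- liminf bound
  have hliminf : S ≤ liminf (fun T : ℝ => M T / ENNReal.ofReal (T ^ d)) atTop := by
    refine iSup_le fun y => ?_
    refine le_liminf_of_le (by isBoundedDefault) ?_
    filter_upwards [eventually_gt_atTop (0 : ℝ)] with T hT
    rw [ENNReal.le_div_iff_mul_le (Or.inl (ENNReal.ofReal_pos.2 (pow_pos hT d)).ne')
      (Or.inl ENNReal.ofReal_ne_top)]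
    exact PickandsAux.lower_bound hcont y hT
  -- delta facts
  have hδ0 : Tendsto δ atTop (𝓝 0) := PickandsAux.delta_tendsto hcont hM1
  -- limsup bound
  have hlimsup : limsup (fun T : ℝ => M T / ENNReal.ofReal (T ^ d)) atTop ≤ S := by
    have key : ∀ n : ℕ,
        limsup (fun T : ℝ => M T / ENNReal.ofReal (T ^ d)) atTop ≤ S + δ n := by
      intro n
      have hev : ∀ᶠ T : ℝ in atTop, M T / ENNReal.ofReal (T ^ d) ≤
          S * ENNReal.ofReal (((T + 2 * n) / T) ^ d) +
            δ n * ENNReal.ofReal (((⌈T⌉₊ : ℝ) / T) ^ d) := by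
        filter_upwards [eventually_gt_atTop (0 : ℝ)] with T hT
        apply ENNReal.div_le_of_le_mul
        have hTd : (T : ℝ) ^ d ≠ 0 := (pow_pos hT d).ne'
        have e1 : ENNReal.ofReal (((T + 2 * n) / T) ^ d) * ENNReal.ofReal (T ^ d) =
            ENNReal.ofReal ((T + 2 * n) ^ d) := by
          rw [← ENNReal.ofReal_mul (by positivity), div_pow, div_mul_cancel₀ _ hTd]
        have e2 : ENNReal.ofReal (((⌈T⌉₊ : ℝ) / T) ^ d) * ENNReal.ofReal (T ^ d) =
            (⌈T⌉₊ : ℝ≥0∞) ^ d := by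
          rw [← ENNReal.ofReal_mul (by positivity), div_pow, div_mul_cancel₀ _ hTd,
            ← ENNReal.ofReal_natCast ⌈T⌉₊, ← ENNReal.ofReal_pow (by positivity)]
        calc M T ≤ S * ENNReal.ofReal ((T + 2 * n) ^ d) + (⌈T⌉₊ : ℝ≥0∞) ^ d * δ n :=
              PickandsAux.main_bound hcont hSb n hT
          _ = (S * ENNReal.ofReal (((T + 2 * n) / T) ^ d) +
              δ n * ENNReal.ofReal (((⌈T⌉₊ : ℝ) / T) ^ d)) * ENNReal.ofReal (T ^ d) := by
              rw [add_mul, mul_assoc, e1, mul_assoc, e2, mul_comm (δ n)]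
      have hr1 : Tendsto (fun T : ℝ => ((T + 2 * n) / T) ^ d) atTop (𝓝 1) := by
        have h0 : Tendsto (fun T : ℝ => (T + 2 * n) / T) atTop (𝓝 1) := by
          have hc : Tendsto (fun T : ℝ => 1 + 2 * n / T) atTop (𝓝 (1 + 0)) :=
            tendsto_const_nhds.add (Filter.Tendsto.const_div_atTop tendsto_id _)
          rw [add_zero] at hc
          apply hc.congr'
          filter_upwards [eventually_gt_atTop (0 : ℝ)] with T hT
          field_simp
        simpa using h0.pow d
      have hr2 : Tendsto (fun T : ℝ => ((⌈T⌉₊ : ℝ) / T) ^ d) atTop (𝓝 1) := by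
        have h0 : Tendsto (fun T : ℝ => (⌈T⌉₊ : ℝ) / T) atTop (𝓝 1) := by
          have hup : Tendsto (fun T : ℝ => (T + 1) / T) atTop (𝓝 1) := by
            have hc : Tendsto (fun T : ℝ => 1 + 1 / T) atTop (𝓝 (1 + 0)) :=
              tendsto_const_nhds.add (Filter.Tendsto.const_div_atTop tendsto_id _)
            rw [add_zero] at hc
            apply hc.congr'
            filter_upwards [eventually_gt_atTop (0 : ℝ)] with T hT
            field_simp
          refine tendsto_of_tendsto_of_tendsto_of_le_of_le' (tendsto_const_nhds (x := (1:ℝ)))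
            hup ?_ ?_
          · filter_upwards [eventually_gt_atTop (0 : ℝ)] with T hT
            rw [le_div_iff₀ hT, one_mul]
            exact Nat.le_ceil T
          · filter_upwards [eventually_gt_atTop (0 : ℝ)] with T hT
            have h := (Nat.ceil_lt_add_one hT.le).le
            gcongr
        simpa using h0.pow d
      have h1 : Tendsto (fun T : ℝ => S * ENNReal.ofReal (((T + 2 * n) / T) ^ d) +
          δ n * ENNReal.ofReal (((⌈T⌉₊ : ℝ) / T) ^ d)) atTop (𝓝 (S * 1 + δ n * 1)) := by
        apply Filter.Tendsto.add
        · exact ENNReal.Tendsto.const_mul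
            (by simpa using ENNReal.tendsto_ofReal hr1) (Or.inl one_ne_zero)
        · exact ENNReal.Tendsto.const_mul
            (by simpa using ENNReal.tendsto_ofReal hr2) (Or.inl one_ne_zero)
      calc limsup (fun T : ℝ => M T / ENNReal.ofReal (T ^ d)) atTop
          ≤ limsup (fun T : ℝ => S * ENNReal.ofReal (((T + 2 * n) / T) ^ d) +
              δ n * ENNReal.ofReal (((⌈T⌉₊ : ℝ) / T) ^ d)) atTop :=
            limsup_le_limsup hev
        _ = S * 1 + δ n * 1 := h1.limsup_eq
        _ = S + δ n := by rw [mul_one, mul_one]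
    have hlim : Tendsto (fun n : ℕ => S + δ n) atTop (𝓝 S) := by
      have := tendsto_const_nhds (x := S) (f := atTop (α := ℕ)) |>.add hδ0
      simpa using this
    exact ge_of_tendsto' hlim key
  exact tendsto_of_le_liminf_of_limsup_le hliminf hlimsup
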